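/- Let F be a field, N a natural number, and A, B N×N matrices over F. Consider the polynomial P(s) = det(A' + s·B') ∈ F[s], where A' and B' are A and B viewed as matrices over F[s] (entrywise via the constant-coefficient embedding) and s is the polynomial variable. Then the degree of P is at most the rank of the matrix B. -/

import Mathlib

open Polynomial Matrix


/-- The degree in `s` of `det(A + s·B)`, viewed as a polynomial in `s` with the
entries of the matrices `A`, `B` over a field as constants, is at most the rank
of the matrix `B` (Section 3.3 of the paper). -/
theorem stmt6 (F : Type*) [Field F] (N : ℕ)
    (A B : Matrix (Fin N) (Fin N) F) :
    ((Matrix.of fun i j =>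
        Polynomial.C (A i j) + Polynomial.X * Polynomial.C (B i j) :
        Matrix (Fin N) (Fin N) (Polynomial F)).det).natDegree ≤ B.rank := by
  classical
  set M : Matrix (Fin N) (Fin N) F[X] :=
    Matrix.of fun i j => C (A i j) + X * C (B i j) with hM
  set f := B.mulVecLin with hf
  obtain ⟨W, hW⟩ := (LinearMap.ker f).exists_isCompl
  set r := Module.finrank F W with hrdef
  set k := Module.finrank F (LinearMap.ker f) with hkdef
  have hrk : r + k = N := by
    have := Submodule.finrank_add_eq_of_isCompl hW.symm
    simpa [Module.finrank_fintype_fun_eq_card] using this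
  have hr : r ≤ B.rank := by
    have h1 : B.rank + k = N := by
      have := LinearMap.finrank_range_add_finrank_ker f
      simpa [Matrix.rank, Module.finrank_fintype_fun_eq_card] using this
    omega
  let bW : Module.Basis (Fin r) F W := Module.finBasis F W
  let bK : Module.Basis (Fin k) F (LinearMap.ker f) := Module.finBasis F (LinearMap.ker f)
  let c : Module.Basis (Fin r ⊕ Fin k) F (Fin N → F) :=
    (bW.prod bK).map (Submodule.prodEquivOfIsCompl _ _ hW.symm)
  have hker : ∀ i : Fin k, B.mulVec (c (Sum.inr i)) = 0 := by
    intro i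
    have hc : c (Sum.inr i) = (bK i : Fin N → F) := by
      simp only [c, Module.Basis.map_apply]
      rw [show ((bW.prod bK) (Sum.inr i)) = (0, bK i) from
        Prod.ext (Module.Basis.prod_apply_inr_fst _ _ _) (Module.Basis.prod_apply_inr_snd _ _ _)]
      show W.subtype.coprod (LinearMap.ker f).subtype (0, bK i) = _
      simp
    have : f (c (Sum.inr i)) = 0 := by
      rw [hc]; exact (LinearMap.mem_ker).mp (bK i).2
    simpa [hf, Matrix.mulVecLin_apply] using this
  let e : (Fin r ⊕ Fin k) ≃ Fin N := finSumFinEquiv.trans (finCongr hrk)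
  let b : Module.Basis (Fin N) F (Fin N → F) := c.reindex e
  let Q : Matrix (Fin N) (Fin N) F := (Pi.basisFun F (Fin N)).toMatrix b
  have hQ : ∀ i j, Q i j = b j i := by
    intro i j
    simp [Q, Module.Basis.toMatrix_apply]
  have hQinv : Invertible Q := (Pi.basisFun F (Fin N)).invertibleToMatrix b
  have hdetQ : Q.det ≠ 0 := by
    have := Matrix.isUnit_det_of_invertible Q
    exact this.ne_zero
  -- B * Q columns
  have hBQ : ∀ i j, (B * Q) i j = B.mulVec (b j) i := by
    intro i j
    simp [Matrix.mul_apply, Matrix.mulVec, dotProduct, hQ]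
  have hBQzero : ∀ j, (e.symm j).isRight → ∀ i, (B * Q) i j = 0 := by
    intro j hj i
    obtain ⟨i0, hi0⟩ := Sum.isRight_iff.mp hj
    rw [hBQ]
    have : b j = c (Sum.inr i0) := by simp [b, Module.Basis.reindex_apply, hi0]
    rw [this, hker i0]
    rfl
  -- the product matrix
  set Q' : Matrix (Fin N) (Fin N) F[X] := Q.map C with hQ'
  have hMQ : ∀ i j, (M * Q') i j = C ((A * Q) i j) + X * C ((B * Q) i j) := by
    intro i j
    simp only [Matrix.mul_apply, hM, Matrix.of_apply, Matrix.map_apply, hQ', map_sum,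
      Finset.mul_sum, ← Finset.sum_add_distrib]
    exact Finset.sum_congr rfl fun l _ => by rw [add_mul, mul_assoc, ← C_mul, ← C_mul]
  -- degree bound on entries
  have hdeg : ∀ i j, ((M * Q') i j).natDegree ≤
      if (e.symm j).isLeft then 1 else 0 := by
    intro i j
    rw [hMQ]
    by_cases h : (e.symm j).isLeft
    · simp only [h, if_true]
      refine (natDegree_add_le _ _).trans ?_
      simp [natDegree_C]
      exact (natDegree_mul_le).trans (by simp)
    · have hright : (e.symm j).isRight := Sum.not_isLeft.mp h
      simp only [h, if_false]
      rw [hBQzero j hright i]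
      simp
  -- degree of determinant
  have hdetMQ : ((M * Q').det).natDegree ≤ r := by
    rw [Matrix.det_apply']
    refine natDegree_sum_le_of_forall_le _ _ ?_
    intro σ _
    refine (natDegree_mul_le).trans ?_
    have h1 : (Equiv.Perm.sign σ : F[X]).natDegree = 0 := by
      rcases Int.units_eq_one_or (Equiv.Perm.sign σ) with h | h <;> simp [h]
    rw [h1, zero_add]
    refine (natDegree_prod_le _ _).trans ?_
    calc ∑ j, ((M * Q') (σ j) j).natDegree
        ≤ ∑ j : Fin N, (if (e.symm j).isLeft then 1 else 0) :=
          Finset.sum_le_sum fun j _ => hdeg (σ j) j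
      _ = ∑ x : Fin r ⊕ Fin k, (if x.isLeft then 1 else 0) := by
          rw [← Equiv.sum_comp e (fun j => if (e.symm j).isLeft then 1 else 0)]
          simp
      _ = r := by
          rw [Fintype.sum_sum_type]
          simp
  -- conclude
  have hdetQ' : Q'.det = C Q.det := by
    rw [hQ']
    exact (RingHom.map_det (C : F →+* F[X]) Q).symm
  have hmul : (M * Q').det = M.det * C Q.det := by rw [Matrix.det_mul, hdetQ']
  by_cases hMdet : M.det = 0
  · simp [hMdet]
  · have : (M.det * C Q.det).natDegree = M.det.natDegree := by
      rw [natDegree_mul hMdet (by simpa using hdetQ)]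
      simp
    have h2 : M.det.natDegree ≤ r := by rw [← this, ← hmul]; exact hdetMQ
    exact h2.trans hr
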